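/- For i ≤ i' in [n], the set ⋃_j [(e_i)_j, max((e_i)_j, (e_{i'})_j)] is empty or has measure 0; for i > i', it equals [0,1] and has measure 1. Consequently the IQE component on the vectors e_i exactly represents the comparison quasimetric κ(i,i') := 1[i > i'] on [n]. -/

import Mathlib

/-- `e i ∈ {0,1}^n`: first `i` coordinates are `0`, remaining are `1`
(coordinates `j` are 0-indexed, so `(e i) j = 0` iff `j < i`). -/
def eVec (n : ℕ) (i : ℕ) (j : Fin n) : ℝ :=
  if (j : ℕ) < i then 0 else 1

theorem iqe_on_eVecs_represents_comparison {n : ℕ} (i i' : ℕ)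
    (hi : 1 ≤ i ∧ i ≤ n) (hi' : 1 ≤ i' ∧ i' ≤ n) :
    (i ≤ i' →
      MeasureTheory.volume
        (⋃ j : Fin n, Set.Icc (eVec n i j) (max (eVec n i j) (eVec n i' j))) = 0) ∧
    (i' < i →
      (⋃ j : Fin n, Set.Icc (eVec n i j) (max (eVec n i j) (eVec n i' j)))
        = Set.Icc (0 : ℝ) 1 ∧
      MeasureTheory.volume
        (⋃ j : Fin n, Set.Icc (eVec n i j) (max (eVec n i j) (eVec n i' j))) = 1) ∧
    (MeasureTheory.volume
        (⋃ j : Fin n, Set.Icc (eVec n i j) (max (eVec n i j) (eVec n i' j)))).toReal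
      = if i ≤ i' then 0 else 1 := by
  have hle : ∀ h : i ≤ i',
      MeasureTheory.volume
        (⋃ j : Fin n, Set.Icc (eVec n i j) (max (eVec n i j) (eVec n i' j))) = 0 := by
    intro h
    have hsub : (⋃ j : Fin n, Set.Icc (eVec n i j) (max (eVec n i j) (eVec n i' j)))
        ⊆ ({0, 1} : Set ℝ) := by
      intro x hx
      simp only [Set.mem_iUnion] at hx
      obtain ⟨j, hj⟩ := hx
      unfold eVec at hj
      by_cases hji : (j : ℕ) < i
      · have hji' : (j : ℕ) < i' := lt_of_lt_of_le hji h
        simp [hji, hji'] at hj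
        simp [hj]
      · by_cases hji' : (j : ℕ) < i' <;> simp [hji, hji'] at hj <;> simp [hj]
    have : MeasureTheory.volume ({0, 1} : Set ℝ) = 0 :=
      (Set.toFinite ({0,1} : Set ℝ)).measure_zero _
    exact le_antisymm (le_trans (MeasureTheory.measure_mono hsub) this.le) zero_le
  have hgt : ∀ h : i' < i,
      (⋃ j : Fin n, Set.Icc (eVec n i j) (max (eVec n i j) (eVec n i' j)))
        = Set.Icc (0 : ℝ) 1 := by
    intro h
    apply Set.Subset.antisymm
    · intro x hx
      simp only [Set.mem_iUnion] at hx
      obtain ⟨j, hj⟩ := hx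
      unfold eVec at hj
      by_cases hji : (j : ℕ) < i <;> by_cases hji' : (j : ℕ) < i' <;>
        simp [hji, hji'] at hj <;> simp [hj] <;> norm_num
    · have hjlt : i - 1 < n := lt_of_lt_of_le (Nat.sub_lt (lt_of_lt_of_le hi.1 le_rfl) one_pos) hi.2
      intro x hx
      simp only [Set.mem_iUnion]
      refine ⟨⟨i - 1, hjlt⟩, ?_⟩
      have h1 : (i - 1 : ℕ) < i := Nat.sub_lt hi.1 one_pos
      have h2 : ¬ (i - 1 : ℕ) < i' := by omega
      unfold eVec
      simp only [h1, h2, if_true, if_false]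
      simpa using hx
  refine ⟨hle, fun h => ⟨hgt h, ?_⟩, ?_⟩
  · rw [hgt h, Real.volume_Icc]
    norm_num
  · by_cases h : i ≤ i'
    · simp [h, hle h]
    · push_neg at h
      rw [hgt h, Real.volume_Icc]
      simp [not_le.mpr h]
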